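/- Let (x, A) be a seed with x=(x_1,…,x_n,y_1,…,y_n), and fix an index k with 1 ≤ k ≤ n. Define x'_i = x_i for i ≠ k and x'_k = x_k^{-1}(∏_{i=1}^n x_i^{[a_{ik}]_+} ∏_{i=1}^n y_i^{[a_{n+i,k}]_+} + ∏_{i=1}^n x_i^{[-a_{ik}]_+} ∏_{i=1}^n y_i^{[-a_{n+i,k}]_+}), where [a]_+ := max(a,0). Then the 2n-tuple (x'_1,…,x'_n,y_1,…,y_n) is again a free generating set of F over ℚ; in particular, the pair μ_k(x,A) = ((x'_1,…,x'_n,y_1,…,y_n), μ_k A) is again a seed. -/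

import Mathlib

noncomputable section

/-- The ambient field `F`: the field of rational functions in `2n` variables over `ℚ`,
realized as the fraction field of the polynomial ring in the `2n` indeterminates
`x_1, …, x_n` (indexed by `Sum.inl`) and `y_1, …, y_n` (indexed by `Sum.inr`). -/
abbrev CField (n : ℕ) : Type := FractionRing (MvPolynomial (Fin n ⊕ Fin n) ℚ)

/-- Mutation of an integer matrix (rows indexed by `ρ`, columns by `Fin n`) at column `k`,
where `e : Fin n → ρ` identifies each column index with a row index.
`(μ_k A)_{ij} = -a_{ij}` if `i = k` or `j = k`, and
`(μ_k A)_{ij} = a_{ij} + a_{ik}[a_{kj}]_+ + [-a_{ik}]_+ a_{kj}` otherwise, where `[a]_+ = max a 0`. -/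
def matMutate {ρ : Type*} [DecidableEq ρ] {n : ℕ} (e : Fin n → ρ)
    (A : Matrix ρ (Fin n) ℤ) (k : Fin n) : Matrix ρ (Fin n) ℤ :=
  fun i j =>
    if i = e k ∨ j = k then -A i j
    else A i j + A i k * max (A (e k) j) 0 + max (-A i k) 0 * A (e k) j

/-- The mutated `2n`-tuple of the seed mutation at `k`:
`x'_i = x_i` for `i ≠ k`, the coefficients `y_i` are unchanged, and
`x'_k = x_k⁻¹ (∏ x_i^{[a_{ik}]_+} ∏ y_i^{[a_{n+i,k}]_+} + ∏ x_i^{[-a_{ik}]_+} ∏ y_i^{[-a_{n+i,k}]_+})`,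
where `[a]_+ = max a 0` (note `Int.toNat a = max a 0` as a natural number). -/
def seedMutX {n : ℕ} (x : Fin n ⊕ Fin n → CField n)
    (A : Matrix (Fin n ⊕ Fin n) (Fin n) ℤ) (k : Fin n) : Fin n ⊕ Fin n → CField n
  | Sum.inl i =>
      if i = k then
        (x (Sum.inl k))⁻¹ *
          ((∏ i' : Fin n, x (Sum.inl i') ^ (A (Sum.inl i') k).toNat) *
              (∏ i' : Fin n, x (Sum.inr i') ^ (A (Sum.inr i') k).toNat) +
            (∏ i' : Fin n, x (Sum.inl i') ^ (-(A (Sum.inl i') k)).toNat) *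
              (∏ i' : Fin n, x (Sum.inr i') ^ (-(A (Sum.inr i') k)).toNat))
      else x (Sum.inl i)
  | Sum.inr i => x (Sum.inr i)

/-- Multiplying an algebraic element by (the image of) a scalar keeps it algebraic. -/
lemma IsAlgebraic.algebraMap_mul' {R K : Type*} [CommRing R] [Field K] [Algebra R K]
    (r : R) {y : K} (h : IsAlgebraic R y) : IsAlgebraic R (algebraMap R K r * y) := by
  obtain ⟨p, hp, hpa⟩ := h
  exact ⟨p.scaleRoots r, Polynomial.scaleRoots_ne_zero hp r,
    Polynomial.scaleRoots_aeval_eq_zero hpa⟩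

lemma matMutate_skew {n : ℕ} (A : Matrix (Fin n ⊕ Fin n) (Fin n) ℤ)
    (d : Fin n → ℤ) (hd : ∀ i, 0 < d i)
    (hA : ∀ i j, A (Sum.inl i) j * d j = -A (Sum.inl j) i * d i) (k i j : Fin n) :
    matMutate Sum.inl A k (Sum.inl i) j * d j
      = -(matMutate Sum.inl A k (Sum.inl j) i) * d i := by
  unfold matMutate
  by_cases hik : i = k
  · rw [if_pos (Or.inl (by rw [hik])), if_pos (Or.inr hik)]
    linarith [hA i j]
  · by_cases hjk : j = k
    · rw [if_pos (Or.inr hjk), if_pos (Or.inl (by rw [hjk]))]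
      linarith [hA i j]
    · rw [if_neg (by simp [hik, hjk]), if_neg (by simp [hik, hjk])]
      rcases le_total (A (Sum.inl i) k) 0 with h1 | h1 <;>
        rcases le_total (A (Sum.inl k) j) 0 with h2 | h2
      · have h3 : 0 ≤ A (Sum.inl k) i := by nlinarith [hA i k, hd k, hd i]
        have h4 : 0 ≤ A (Sum.inl j) k := by nlinarith [hA j k, hd k, hd j]
        rw [max_eq_right h2, max_eq_left (by linarith : (0:ℤ) ≤ -A (Sum.inl i) k),
          max_eq_left h3, max_eq_right (by linarith : -A (Sum.inl j) k ≤ 0)]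
        linear_combination hA i j - A (Sum.inl i) k * hA k j + A (Sum.inl j) k * hA i k
      · have h3 : 0 ≤ A (Sum.inl k) i := by nlinarith [hA i k, hd k, hd i]
        have h4 : A (Sum.inl j) k ≤ 0 := by nlinarith [hA j k, hd k, hd j]
        rw [max_eq_left h2, max_eq_left (by linarith : (0:ℤ) ≤ -A (Sum.inl i) k),
          max_eq_left h3, max_eq_left (by linarith : (0:ℤ) ≤ -A (Sum.inl j) k)]
        linear_combination hA i j
      · have h3 : A (Sum.inl k) i ≤ 0 := by nlinarith [hA i k, hd k, hd i]
        have h4 : 0 ≤ A (Sum.inl j) k := by nlinarith [hA j k, hd k, hd j]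
        rw [max_eq_right h2, max_eq_right (by linarith : -A (Sum.inl i) k ≤ 0),
          max_eq_right h3, max_eq_right (by linarith : -A (Sum.inl j) k ≤ 0)]
        linear_combination hA i j
      · have h3 : A (Sum.inl k) i ≤ 0 := by nlinarith [hA i k, hd k, hd i]
        have h4 : A (Sum.inl j) k ≤ 0 := by nlinarith [hA j k, hd k, hd j]
        rw [max_eq_left h2, max_eq_right (by linarith : -A (Sum.inl i) k ≤ 0),
          max_eq_right h3, max_eq_left (by linarith : (0:ℤ) ≤ -A (Sum.inl j) k)]
        linear_combination hA i j + A (Sum.inl i) k * hA k j - A (Sum.inl j) k * hA i k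

/-- If `(x, A)` is a seed (so `x` is a free generating set of `F` over `ℚ`,
i.e. algebraically independent and generating `F` as a field extension of `ℚ`, and the upper
part of `A` is skew-symmetrizable), then for any `k` the mutated `2n`-tuple is again a free
generating set of `F` over `ℚ`; in particular `μ_k(x, A)` is again a seed. -/
theorem seed_mutation_is_seed {n : ℕ} (x : Fin n ⊕ Fin n → CField n)
    (A : Matrix (Fin n ⊕ Fin n) (Fin n) ℤ)
    (hindep : AlgebraicIndependent ℚ x)
    (hgen : IntermediateField.adjoin ℚ (Set.range x) = ⊤)
    (hskew : ∃ d : Fin n → ℤ, (∀ i, 0 < d i) ∧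
      ∀ i j, A (Sum.inl i) j * d j = -A (Sum.inl j) i * d i)
    (k : Fin n) :
    AlgebraicIndependent ℚ (seedMutX x A k) ∧
    IntermediateField.adjoin ℚ (Set.range (seedMutX x A k)) = ⊤ ∧
    ∃ d : Fin n → ℤ, (∀ i, 0 < d i) ∧
      ∀ i j, matMutate Sum.inl A k (Sum.inl i) j * d j
        = -(matMutate Sum.inl A k (Sum.inl j) i) * d i := by
  classical
  obtain ⟨d, hd, hA⟩ := hskew
  -- diagonal entry vanishes
  have hAkk : A (Sum.inl k) k = 0 := by
    have h := hA k k
    have h0 : A (Sum.inl k) k * d k = 0 := by linarith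
    rcases mul_eq_zero.mp h0 with h' | h'
    · exact h'
    · exact absurd h' (hd k).ne'
  set k₀ : Fin n ⊕ Fin n := Sum.inl k with hk₀
  -- the exchange binomial M
  set M : CField n :=
    (∏ i' : Fin n, x (Sum.inl i') ^ (A (Sum.inl i') k).toNat) *
        (∏ i' : Fin n, x (Sum.inr i') ^ (A (Sum.inr i') k).toNat) +
      (∏ i' : Fin n, x (Sum.inl i') ^ (-(A (Sum.inl i') k)).toNat) *
        (∏ i' : Fin n, x (Sum.inr i') ^ (-(A (Sum.inr i') k)).toNat) with hMdef
  set P : MvPolynomial (Fin n ⊕ Fin n) ℚ :=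
    (∏ i' : Fin n, MvPolynomial.X (Sum.inl i') ^ (A (Sum.inl i') k).toNat) *
        (∏ i' : Fin n, MvPolynomial.X (Sum.inr i') ^ (A (Sum.inr i') k).toNat) +
      (∏ i' : Fin n, MvPolynomial.X (Sum.inl i') ^ (-(A (Sum.inl i') k)).toNat) *
        (∏ i' : Fin n, MvPolynomial.X (Sum.inr i') ^ (-(A (Sum.inr i') k)).toNat) with hPdef
  have hPM : MvPolynomial.aeval x P = M := by
    simp [hPdef, hMdef]
  have hP0 : P ≠ 0 := by
    intro h
    have h2 := congrArg (MvPolynomial.eval (fun _ => (1 : ℚ))) h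
    rw [hPdef] at h2
    simp at h2
  have hM0 : M ≠ 0 := by
    rw [← hPM]
    intro h
    exact hP0 (hindep (by rw [h, map_zero]))
  have hx0 : ∀ i, x i ≠ 0 := fun i h =>
    (hindep.transcendental i) (h ▸ isAlgebraic_zero)
  set f : CField n := (x k₀)⁻¹ * M with hfdef
  have hf0 : f ≠ 0 := mul_ne_zero (inv_ne_zero (hx0 k₀)) hM0
  have hxk : x k₀ = M * f⁻¹ := by
    rw [hfdef, mul_inv, inv_inv, ← mul_assoc, mul_comm M, mul_assoc,
      mul_inv_cancel₀ hM0, mul_one]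
  -- membership of M in any subalgebra containing the non-k₀ variables
  have hMem : ∀ T : Subalgebra ℚ (CField n), (∀ i, i ≠ k₀ → x i ∈ T) → M ∈ T := by
    intro T hT
    have h1 : ∀ e : Fin n → ℕ, e k = 0 → (∏ i' : Fin n, x (Sum.inl i') ^ e i') ∈ T := by
      intro e he
      apply Subalgebra.prod_mem
      intro i' _
      by_cases h : i' = k
      · subst h; rw [he, pow_zero]; exact one_mem T
      · exact pow_mem (hT (Sum.inl i') (by simp [hk₀, h])) _
    have h2 : ∀ e : Fin n → ℕ, (∏ i' : Fin n, x (Sum.inr i') ^ e i') ∈ T := by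
      intro e
      apply Subalgebra.prod_mem
      intro i' _
      exact pow_mem (hT (Sum.inr i') (by simp [hk₀])) _
    exact add_mem (mul_mem (h1 _ (by simp [show A (Sum.inl k) k = 0 from hAkk])) (h2 _))
      (mul_mem (h1 _ (by simp [show A (Sum.inl k) k = 0 from hAkk])) (h2 _))
  -- the restricted family
  set x₁ : {i : Fin n ⊕ Fin n // i ≠ k₀} → CField n := fun i => x i with hx₁def
  have hx₁ : AlgebraicIndependent ℚ x₁ := hindep.comp Subtype.val Subtype.val_injective
  -- x k₀ is transcendental over the adjoin of the rest
  have hopt : AlgebraicIndependent ℚ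
      (fun o : Option {i : Fin n ⊕ Fin n // i ≠ k₀} => o.elim (x k₀) x₁) := by
    have hg : Function.Injective
        (fun o : Option {i : Fin n ⊕ Fin n // i ≠ k₀} => o.elim k₀ Subtype.val) := by
      rintro (_ | a) (_ | b) h
      · rfl
      · exact absurd h.symm b.2
      · exact absurd h a.2
      · exact congrArg some (Subtype.ext h)
    have := hindep.comp _ hg
    convert this using 1
    funext o
    cases o <;> rfl
  have T1 : Transcendental (Algebra.adjoin ℚ (Set.range x₁)) (x k₀) :=
    (hx₁.option_iff_transcendental (x k₀)).mp hopt
  have hMK : M ∈ Algebra.adjoin ℚ (Set.range x₁) :=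
    hMem _ (fun i hi => Algebra.subset_adjoin ⟨⟨i, hi⟩, rfl⟩)
  -- f is transcendental over the adjoin of the rest
  have T2 : Transcendental (Algebra.adjoin ℚ (Set.range x₁)) f := by
    intro halg
    apply T1
    have h1 : IsAlgebraic (Algebra.adjoin ℚ (Set.range x₁)) f⁻¹ := halg.inv
    have h2 : x k₀ = algebraMap (Algebra.adjoin ℚ (Set.range x₁)) (CField n) ⟨M, hMK⟩ * f⁻¹ :=
      hxk
    rw [h2]
    exact h1.algebraMap_mul' _
  have T3 : AlgebraicIndependent ℚ
      (fun o : Option {i : Fin n ⊕ Fin n // i ≠ k₀} => o.elim f x₁) :=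
    (hx₁.option_iff_transcendental f).mpr T2
  -- identify the mutated family
  have hfix : ∀ i, i ≠ k₀ → seedMutX x A k i = x i := by
    rintro (i | i) hi
    · have : i ≠ k := fun h => hi (by simp [hk₀, h])
      simp [seedMutX, this]
    · rfl
  have hfk : seedMutX x A k k₀ = f := by
    simp [seedMutX, hk₀, hfdef, hMdef]
  refine ⟨?_, ?_, ?_⟩
  · -- algebraic independence
    set g' : (Fin n ⊕ Fin n) → Option {i : Fin n ⊕ Fin n // i ≠ k₀} :=
      fun i => if h : i = k₀ then none else some ⟨i, h⟩ with hg'def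
    have hg' : Function.Injective g' := by
      intro a b hab
      by_cases ha : a = k₀
      · by_cases hb : b = k₀
        · rw [ha, hb]
        · simp [hg'def, ha, hb] at hab
      · by_cases hb : b = k₀
        · simp [hg'def, ha, hb] at hab
        · simp [hg'def, ha, hb] at hab
          exact hab
    have hx' : seedMutX x A k =
        (fun o : Option {i : Fin n ⊕ Fin n // i ≠ k₀} => o.elim f x₁) ∘ g' := by
      funext c
      by_cases h : c = k₀
      · subst h; simp [hg'def, hfk]
      · simp [hg'def, h, hfix c h, hx₁def]
    rw [hx']
    exact T3.comp g' hg'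
  · -- generation
    rw [eq_top_iff, ← hgen]
    rw [IntermediateField.adjoin_le_iff]
    rintro _ ⟨i, rfl⟩
    by_cases h : i = k₀
    · subst h
      have hfmem : f ∈ IntermediateField.adjoin ℚ (Set.range (seedMutX x A k)) :=
        IntermediateField.subset_adjoin _ _ ⟨k₀, hfk⟩
      have hMmem : M ∈ IntermediateField.adjoin ℚ (Set.range (seedMutX x A k)) := by
        have := hMem (IntermediateField.adjoin ℚ (Set.range (seedMutX x A k))).toSubalgebra
          (fun i hi => IntermediateField.subset_adjoin _ _ ⟨i, hfix i hi⟩)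
        exact this
      rw [hxk]
      exact mul_mem hMmem (inv_mem hfmem)
    · exact IntermediateField.subset_adjoin _ _ ⟨i, hfix i h⟩
  · -- skew-symmetrizability of the mutated matrix
    exact ⟨d, hd, fun i j => matMutate_skew A d hd hA k i j⟩
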